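/- A set S ⊆ {−,+}^n containing the all-plus and all-minus vectors is d-realisable if and only if S × {+,−} ⊆ {−,+}^{n+1} is (d+1)-realisable. -/

import Mathlib

/-- S ⊆ {−,+}^n (+ is `true`) is d-realisable if there are n oriented affine hyperplanes
in ℝ^d such that every σ ∈ S is the sign pattern of some point. -/
def Realisable (d n : ℕ) (S : Set (Fin n → Bool)) : Prop :=
  ∃ (c : Fin n → EuclideanSpace ℝ (Fin d)) (β : Fin n → ℝ),
    (∀ i, c i ≠ 0) ∧
    ∀ σ ∈ S, ∃ p : EuclideanSpace ℝ (Fin d),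
      ∀ i, if σ i then β i < (inner ℝ (c i) p : ℝ) else (inner ℝ (c i) p : ℝ) < β i

section Aux

open Module Submodule


open Module Submodule

noncomputable def ext1 {d : ℕ} (v : EuclideanSpace ℝ (Fin d)) (a : ℝ) :
    EuclideanSpace ℝ (Fin (d+1)) := WithLp.toLp 2 (Fin.snoc (WithLp.ofLp v) a)

lemma inner_ext1 {d : ℕ} (v p : EuclideanSpace ℝ (Fin d)) (a b : ℝ) :
    (inner ℝ (ext1 v a) (ext1 p b) : ℝ) = (inner ℝ v p : ℝ) + a * b := by
  simp [ext1, PiLp.inner_apply, Fin.sum_univ_castSucc, RCLike.inner_apply]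
  ring

lemma ext1_ne_zero {d : ℕ} {v : EuclideanSpace ℝ (Fin d)} (hv : v ≠ 0) (a : ℝ) :
    ext1 v a ≠ 0 := by
  intro h
  apply hv
  ext j
  have := congrArg (fun x : EuclideanSpace ℝ (Fin (d+1)) => x j.castSucc) h
  simpa [ext1] using this


private theorem forward (d n : ℕ) (S : Set (Fin n → Bool)) (h : Realisable d n S) :
    Realisable (d + 1) (n + 1) {τ : Fin (n + 1) → Bool | Fin.init τ ∈ S} := by
  obtain ⟨c, β, hc, hr⟩ := h
  refine ⟨Fin.snoc (fun i => ext1 (c i) 0) (ext1 0 1), Fin.snoc β 0, ?_, ?_⟩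
  · intro i
    refine Fin.lastCases ?_ (fun i => ?_) i
    · simp only [Fin.snoc_last]
      intro h
      have := congrArg (fun x : EuclideanSpace ℝ (Fin (d+1)) => x (Fin.last d)) h
      simp [ext1] at this
    · simp only [Fin.snoc_castSucc]
      exact ext1_ne_zero (hc i) 0
  · intro τ hτ
    obtain ⟨p, hp⟩ := hr (Fin.init τ) hτ
    refine ⟨ext1 p (if τ (Fin.last n) then 1 else -1), fun i => ?_⟩
    refine Fin.lastCases ?_ (fun i => ?_) i
    · simp only [Fin.snoc_last, inner_ext1]
      rcases h : τ (Fin.last n) with _ | _ <;> simp [h]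
    · have := hp i
      simp only [Fin.snoc_castSucc, inner_ext1, mul_zero, add_zero]
      have h2 : Fin.init τ i = τ i.castSucc := rfl
      rw [h2] at this
      simpa only [zero_mul, add_zero] using this

private theorem backward (d n : ℕ) (S : Set (Fin n → Bool))
    (hplus : (fun _ => true) ∈ S) (hminus : (fun _ => false) ∈ S)
    (h : Realisable (d + 1) (n + 1) {τ : Fin (n + 1) → Bool | Fin.init τ ∈ S}) :
    Realisable d n S := by
  obtain ⟨C, B, hC, hr⟩ := h
  set cn := C (Fin.last n) with hcn_def
  set bn := B (Fin.last n) with hbn_def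
  have hcn : cn ≠ 0 := hC _
  -- crossing lemma: every σ ∈ S is realised by a point on the last hyperplane
  have cross : ∀ σ ∈ S, ∃ q : EuclideanSpace ℝ (Fin (d+1)),
      (inner ℝ cn q : ℝ) = bn ∧
      ∀ i : Fin n, if σ i then B i.castSucc < (inner ℝ (C i.castSucc) q : ℝ)
        else (inner ℝ (C i.castSucc) q : ℝ) < B i.castSucc := by
    intro σ hσ
    have hmem : ∀ b : Bool, Fin.snoc σ b ∈ {τ : Fin (n + 1) → Bool | Fin.init τ ∈ S} := by
      intro b; simp [Set.mem_setOf_eq, Fin.init_snoc, hσ]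
    obtain ⟨pP, hpP⟩ := hr _ (hmem true)
    obtain ⟨pM, hpM⟩ := hr _ (hmem false)
    have hPn : bn < (inner ℝ cn pP : ℝ) := by simpa using hpP (Fin.last n)
    have hMn : (inner ℝ cn pM : ℝ) < bn := by simpa using hpM (Fin.last n)
    set aP := (inner ℝ cn pP : ℝ) with haP
    set aM := (inner ℝ cn pM : ℝ) with haM
    set t : ℝ := (bn - aM) / (aP - aM) with ht_def
    have hden : (0:ℝ) < aP - aM := by linarith
    have ht0 : 0 < t := div_pos (by linarith) hden
    have ht1 : t < 1 := by rw [div_lt_one hden]; linarith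
    refine ⟨pM + t • (pP - pM), ?_, ?_⟩
    · have hq : (inner ℝ cn (pM + t • (pP - pM)) : ℝ) = aM + t * (aP - aM) := by
        rw [inner_add_right, real_inner_smul_right, inner_sub_right]
      have ht : t * (aP - aM) = bn - aM := div_mul_cancel₀ _ (ne_of_gt hden)
      rw [hq]; linarith
    · intro i
      have h1 := hpP i.castSucc
      have h2 := hpM i.castSucc
      simp only [Fin.snoc_castSucc] at h1 h2
      have hval : (inner ℝ (C i.castSucc) (pM + t • (pP - pM)) : ℝ)
          = (inner ℝ (C i.castSucc) pM : ℝ)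
            + t * ((inner ℝ (C i.castSucc) pP : ℝ) - (inner ℝ (C i.castSucc) pM : ℝ)) := by
        rw [inner_add_right, real_inner_smul_right, inner_sub_right]
      rcases hσi : σ i with _ | _
      · rw [hσi] at h1 h2
        rw [if_neg (by simp : ¬ (false = true))]
        rw [if_neg (by simp)] at h1 h2
        rw [hval]; nlinarith
      · rw [hσi] at h1 h2
        rw [if_pos rfl]
        rw [if_pos rfl] at h1 h2
        rw [hval]; nlinarith
  haveI : Fact (finrank ℝ (EuclideanSpace ℝ (Fin (d+1))) = d + 1) := ⟨finrank_euclideanSpace_fin⟩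
  set K := (ℝ ∙ cn)ᗮ with hK
  let e : K ≃ₗᵢ[ℝ] EuclideanSpace ℝ (Fin d) :=
    (OrthonormalBasis.fromOrthogonalSpanSingleton d hcn).repr
  set x0 : EuclideanSpace ℝ (Fin (d+1)) := (bn / ‖cn‖ ^ 2) • cn with hx0_def
  have hx0 : (inner ℝ cn x0 : ℝ) = bn := by
    rw [hx0_def, real_inner_smul_right, real_inner_self_eq_norm_sq]
    have : ‖cn‖ ≠ 0 := norm_ne_zero_iff.mpr hcn
    field_simp
  -- key: points on the last hyperplane are parametrized by ℝ^d compatibly with inner ℝ products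
  have key : ∀ q : EuclideanSpace ℝ (Fin (d+1)), (inner ℝ cn q : ℝ) = bn →
      ∃ p : EuclideanSpace ℝ (Fin d), ∀ v : EuclideanSpace ℝ (Fin (d+1)),
        (inner ℝ (e (orthogonalProjection K v)) p : ℝ)
          = (inner ℝ v q : ℝ) - (inner ℝ v x0 : ℝ) := by
    intro q hq
    have hmemK : q - x0 ∈ K := by
      rw [hK, Submodule.mem_orthogonal_singleton_iff_inner_right, inner_sub_right, hq, hx0]
      ring
    refine ⟨e ⟨q - x0, hmemK⟩, fun v => ?_⟩
    rw [LinearIsometryEquiv.inner_map_map]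
    have h0 : (inner ℝ (v - (orthogonalProjection K v : EuclideanSpace ℝ (Fin (d+1)))) (q - x0) : ℝ)
        = 0 := K.starProjection_inner_eq_zero v (q - x0) hmemK
    rw [inner_sub_left] at h0
    have hPv : (inner ℝ ((orthogonalProjection K v : EuclideanSpace ℝ (Fin (d+1)))) (q - x0) : ℝ)
        = (inner ℝ v (q - x0) : ℝ) := by linarith
    have : (inner ℝ ((orthogonalProjection K v : K)) (⟨q - x0, hmemK⟩ : K) : ℝ)
        = (inner ℝ ((orthogonalProjection K v : EuclideanSpace ℝ (Fin (d+1)))) (q - x0) : ℝ) := rfl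
    rw [this, hPv, inner_sub_right]
  refine ⟨fun i => e (orthogonalProjection K (C i.castSucc)),
    fun i => B i.castSucc - (inner ℝ (C i.castSucc) x0 : ℝ), ?_, ?_⟩
  · intro i hzero
    have hzero' : e (orthogonalProjection K (C i.castSucc)) = 0 := hzero
    obtain ⟨qP, hqP, hqP2⟩ := cross _ hplus
    obtain ⟨qM, hqM, hqM2⟩ := cross _ hminus
    obtain ⟨pP, hpP⟩ := key qP hqP
    obtain ⟨pM, hpM⟩ := key qM hqM
    have e1 := hpP (C i.castSucc)
    have e2 := hpM (C i.castSucc)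
    rw [hzero', inner_zero_left] at e1 e2
    have g1 := hqP2 i
    have g2 := hqM2 i
    rw [if_pos rfl] at g1
    rw [if_neg (by simp)] at g2
    linarith
  · intro σ hσ
    obtain ⟨q, hq, hq2⟩ := cross σ hσ
    obtain ⟨p, hp⟩ := key q hq
    refine ⟨p, fun i => ?_⟩
    have hthis := hq2 i
    have hv := hp (C i.castSucc)
    rcases hσi : σ i with _ | _
    · rw [if_neg (by simp : ¬ (false = true))]
      rw [hσi, if_neg (by simp : ¬ (false = true))] at hthis
      beta_reduce
      rw [hv]; linarith
    · rw [if_pos rfl]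
      rw [hσi, if_pos rfl] at hthis
      beta_reduce
      rw [hv]; linarith

end Aux

/-- S containing the all-plus and all-minus vectors is d-realisable iff
S × {+,−} is (d+1)-realisable. -/
theorem stmt_10 (d n : ℕ) (S : Set (Fin n → Bool))
    (hplus : (fun _ => true) ∈ S) (hminus : (fun _ => false) ∈ S) :
    Realisable d n S ↔
      Realisable (d + 1) (n + 1) {τ : Fin (n + 1) → Bool | Fin.init τ ∈ S} := by
  exact ⟨forward d n S, backward d n S hplus hminus⟩
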